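/- Let λ_1, λ_2 ∈ ℝ_{≥0} and set Λ_1 = λ_1 + λ_2, Λ_2 = λ_2. Define O ⊆ ℝ³ as the set of (a,b,c) with 0 ≤ a ≤ b ≤ c ≤ Λ_1 and a ≤ Λ_2 ≤ c, and define D ⊆ ℝ³ as the set of (a,b,c) with 0 ≤ a ≤ Λ_2, Λ_2 ≤ c ≤ Λ_1, and 0 ≤ b ≤ c − a. Then the map φ(a,b,c) = (a, b−a, c) is a bijection from O onto D. -/
import Mathlib

/-- The transfer map `(a,b,c) ↦ (a, b-a, c)` is a bijection from the Gelfand--Tsetlin polytope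
of type `A₂` onto the marked chain-order polytope with `C = {q₁⁽²⁾}`, `O = {q₁⁽¹⁾, q₂⁽¹⁾}`. -/
theorem stmt6 (lam1 lam2 : ℝ) (h1 : 0 ≤ lam1) (h2 : 0 ≤ lam2) :
    Set.BijOn (fun p : ℝ × ℝ × ℝ => (p.1, p.2.1 - p.1, p.2.2))
      {p : ℝ × ℝ × ℝ | 0 ≤ p.1 ∧ p.1 ≤ p.2.1 ∧ p.2.1 ≤ p.2.2 ∧ p.2.2 ≤ lam1 + lam2 ∧
        p.1 ≤ lam2 ∧ lam2 ≤ p.2.2}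
      {p : ℝ × ℝ × ℝ | 0 ≤ p.1 ∧ p.1 ≤ lam2 ∧ lam2 ≤ p.2.2 ∧ p.2.2 ≤ lam1 + lam2 ∧
        0 ≤ p.2.1 ∧ p.2.1 ≤ p.2.2 - p.1} := by
  refine ⟨?_, ?_, ?_⟩
  · rintro ⟨a, b, c⟩ ⟨h₁, h₂, h₃, h₄, h₅, h₆⟩
    dsimp only at *
    refine ⟨h₁, h₅, h₆, h₄, ?_, ?_⟩ <;> (show _ ≤ _; dsimp only) <;> linarith
  · rintro ⟨a, b, c⟩ _ ⟨a', b', c'⟩ _ h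
    simp only [Prod.mk.injEq] at h
    obtain ⟨e1, e2, e3⟩ := h
    subst e1 e3
    have : b = b' := by linarith
    subst this
    rfl
  · rintro ⟨a, b, c⟩ ⟨h₁, h₂, h₃, h₄, h₅, h₆⟩
    dsimp only at *
    refine ⟨(a, a + b, c), ⟨h₁, ?_, ?_, h₄, h₂, h₃⟩, by simp⟩ <;> (show _ ≤ _; dsimp only) <;> linarith
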